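/- Let A be a real n×n matrix, b, c ∈ ℝⁿ, h, L, ω ∈ ℝ with L ≠ 0, and φ : ℝ → ℝ. Assume the pair (cᵀ, A) is observable, i.e. cᵀAⁱ y = 0 for all i = 0, …, n−1 implies y = 0. If differentiable functions x : ℝ → ℝⁿ, θ : ℝ → ℝ satisfy ẋ(t) = A x(t) + b φ(θ(t)) and θ̇(t) = ω − L cᵀ x(t) − L h φ(θ(t)) for all t, and θ is constant (θ(t) ≡ θ₀), then x is constant (x(t) ≡ x₀) and (x₀, θ₀) is an equilibrium: A x₀ + b φ(θ₀) = 0 and ω − L cᵀ x₀ − L h φ(θ₀) = 0. -/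

import Mathlib

open Matrix

private lemma dot_hasDerivAt {n : ℕ} (w : Fin n → ℝ) {x : ℝ → Fin n → ℝ} {x' : Fin n → ℝ} {t : ℝ}
    (hx : HasDerivAt x x' t) : HasDerivAt (fun s => w ⬝ᵥ x s) (w ⬝ᵥ x') t := by
  have hcomp : ∀ j, HasDerivAt (fun s => x s j) (x' j) t := by
    intro j
    exact (hasDerivAt_pi.mp hx) j
  have : HasDerivAt (fun s => ∑ j, w j * x s j) (∑ j, w j * x' j) t := by
    apply HasDerivAt.fun_sum
    intro j _
    exact (hcomp j).const_mul (w j)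
  simpa [dotProduct] using this

/-- For an observable loop filter, the locked states of the PLL model
`ẋ = A x + b φ(θ)`, `θ̇ = ω − L cᵀx − L h φ(θ)` are exactly the equilibria:
if the phase error `θ` is constant along a solution, then the filter state `x`
is also constant and the (constant) point is an equilibrium. -/
theorem pll_locked_state_is_equilibrium {n : ℕ}
    (A : Matrix (Fin n) (Fin n) ℝ) (b c : Fin n → ℝ) (h L ω : ℝ) (hL : L ≠ 0)
    (φ : ℝ → ℝ)
    (hobs : ∀ y : Fin n → ℝ, (∀ i : ℕ, i < n → c ⬝ᵥ ((A ^ i) *ᵥ y) = 0) → y = 0)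
    (x : ℝ → (Fin n → ℝ)) (θ : ℝ → ℝ) (θ₀ : ℝ)
    (hx : ∀ t : ℝ, HasDerivAt x (A *ᵥ x t + φ (θ t) • b) t)
    (hθ : ∀ t : ℝ, HasDerivAt θ (ω - L * (c ⬝ᵥ x t) - L * h * φ (θ t)) t)
    (hconst : ∀ t : ℝ, θ t = θ₀) :
    ∃ x₀ : Fin n → ℝ, (∀ t : ℝ, x t = x₀) ∧
      A *ᵥ x₀ + φ θ₀ • b = 0 ∧ ω - L * (c ⬝ᵥ x₀) - L * h * φ θ₀ = 0 := by
  have hθfun : θ = fun _ => θ₀ := funext hconst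
  -- θ' = 0 everywhere
  have hθ0 : ∀ t : ℝ, ω - L * (c ⬝ᵥ x t) - L * h * φ θ₀ = 0 := by
    intro t
    have h1 : HasDerivAt (fun _ : ℝ => θ₀) (ω - L * (c ⬝ᵥ x t) - L * h * φ θ₀) t := by
      have := hθ t
      rw [hθfun] at this
      simpa [hconst t] using this
    exact h1.unique (hasDerivAt_const t θ₀)
  -- c ⬝ᵥ x is constant
  have hc0 : ∀ t : ℝ, c ⬝ᵥ x t = c ⬝ᵥ x 0 := by
    intro t
    have h1 := hθ0 t
    have h2 := hθ0 0
    have : L * (c ⬝ᵥ x t) = L * (c ⬝ᵥ x 0) := by linarith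
    exact mul_left_cancel₀ hL this
  -- the key invariants are constant
  have key : ∀ i : ℕ, ∀ t : ℝ, c ⬝ᵥ ((A ^ i) *ᵥ x t) = c ⬝ᵥ ((A ^ i) *ᵥ x 0) := by
    intro i
    induction i with
    | zero => simpa using hc0
    | succ i ih =>
      -- the function t ↦ c ⬝ᵥ (A^i *ᵥ x t) is constant, so its derivative is 0
      have hderiv : ∀ t : ℝ, c ⬝ᵥ ((A ^ i) *ᵥ (A *ᵥ x t + φ θ₀ • b)) = 0 := by
        intro t
        have hx' := hx t
        rw [hconst t] at hx'
        have h1 : HasDerivAt (fun s => (c ᵥ* (A ^ i)) ⬝ᵥ x s)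
            ((c ᵥ* (A ^ i)) ⬝ᵥ (A *ᵥ x t + φ θ₀ • b)) t := dot_hasDerivAt _ hx'
        have h2 : (fun s => (c ᵥ* (A ^ i)) ⬝ᵥ x s) = fun _ : ℝ => c ⬝ᵥ ((A ^ i) *ᵥ x 0) := by
          funext s
          rw [← Matrix.dotProduct_mulVec]
          exact ih s
        rw [h2] at h1
        have h3 := h1.unique (hasDerivAt_const t _)
        rw [← Matrix.dotProduct_mulVec] at h3
        exact h3
      intro t
      have e1 := hderiv t
      have e2 := hderiv 0
      have expand : ∀ s : ℝ, c ⬝ᵥ ((A ^ i) *ᵥ (A *ᵥ x s + φ θ₀ • b)) =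
          c ⬝ᵥ ((A ^ (i + 1)) *ᵥ x s) + φ θ₀ * (c ⬝ᵥ ((A ^ i) *ᵥ b)) := by
        intro s
        rw [Matrix.mulVec_add, dotProduct_add, Matrix.mulVec_smul,
          dotProduct_smul, pow_succ, Matrix.mulVec_mulVec]
        ring_nf
      rw [expand t] at e1
      rw [expand 0] at e2
      linarith
  -- x is constant by observability
  have hxconst : ∀ t : ℝ, x t = x 0 := by
    intro t
    have : x t - x 0 = 0 := by
      apply hobs
      intro i _
      rw [Matrix.mulVec_sub, dotProduct_sub, key i t, sub_self]
    have := sub_eq_zero.mp this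
    exact this
  refine ⟨x 0, hxconst, ?_, ?_⟩
  · have hx' := hx 0
    rw [hconst 0] at hx'
    have hxfun : x = fun _ : ℝ => x 0 := funext hxconst
    rw [hxfun] at hx'
    exact hx'.unique (hasDerivAt_const 0 (x 0))
  · simpa using hθ0 0
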